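/- arXiv:1404.5452 — 2 statements merged into one kernel-verified Lean document; each statement's English description precedes it below -/
import Mathlib

section
/- For every p > 1 and all real numbers ξ, η, one has |ξ⁻ − η⁻|^p ≤ |ξ − η|^{p−2}(ξ − η)(η⁻ − ξ⁻), where t⁻ := max(−t, 0) denotes the negative part of t ∈ ℝ. -/
open MeasureTheory Filter

/-- The Gagliardo `p`-seminorm raised to the power `p`, as an extended real. -/
noncomputable def gagP (N : ℕ) (s p : ℝ) (u : EuclideanSpace ℝ (Fin N) → ℝ) : ENNReal :=
  ∫⁻ x, ∫⁻ y, ENNReal.ofReal (|u x - u y| ^ p / ‖x - y‖ ^ ((N : ℝ) + s * p))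

/-- The Gagliardo `p`-seminorm `[u]_{s,p}`. -/
noncomputable def gag (N : ℕ) (s p : ℝ) (u : EuclideanSpace ℝ (Fin N) → ℝ) : ℝ :=
  ((gagP N s p u).toReal) ^ (1 / p)

/-- The weak form of the fractional `p`-Laplacian tested against `v`. -/
noncomputable def pairing (N : ℕ) (s p : ℝ) (u v : EuclideanSpace ℝ (Fin N) → ℝ) : ℝ :=
  ∫ x, ∫ y, |u x - u y| ^ (p - 2) * (u x - u y) * (v x - v y) / ‖x - y‖ ^ ((N : ℝ) + s * p)

/-- `F(t) = ∫_0^t f`. -/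
noncomputable def Fint (f : ℝ → ℝ) (t : ℝ) : ℝ := ∫ τ in (0:ℝ)..t, f τ

/-- Membership in `D^{s,p}(ℝ^N)`: `u ∈ L^{p*_s}` and finite Gagliardo seminorm. -/
def memDsp (N : ℕ) (s p : ℝ) (u : EuclideanSpace ℝ (Fin N) → ℝ) : Prop :=
  MemLp u (ENNReal.ofReal (N * p / (N - s * p))) volume ∧ gagP N s p u < ⊤

/-- Membership in `X_R`: in `D^{s,p}` and vanishing (a.e.) outside `B(0,R)`. -/
def memX (N : ℕ) (s p R : ℝ) (u : EuclideanSpace ℝ (Fin N) → ℝ) : Prop :=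
  memDsp N s p u ∧ ∀ᵐ x, x ∉ Metric.ball (0 : EuclideanSpace ℝ (Fin N)) R → u x = 0

/-- The energy functional `J_R`. -/
noncomputable def JR (N : ℕ) (s p R : ℝ) (φ : EuclideanSpace ℝ (Fin N) → ℝ) (f : ℝ → ℝ)
    (u : EuclideanSpace ℝ (Fin N) → ℝ) : ℝ :=
  (1 / p) * (gagP N s p u).toReal -
    ∫ x in Metric.ball (0 : EuclideanSpace ℝ (Fin N)) R, φ x * Fint f (max (u x) 0)

theorem negPart_pow_le (p : ℝ) (hp : 1 < p) (ξ η : ℝ) :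
    |max (-ξ) 0 - max (-η) 0| ^ p ≤
      |ξ - η| ^ (p - 2) * (ξ - η) * (max (-η) 0 - max (-ξ) 0) := by
  have h1 : |max (-ξ) 0 - max (-η) 0| ≤ |ξ - η| := by
    have := abs_max_sub_max_le_abs (-ξ) (-η) 0
    rwa [show -ξ - -η = -(ξ - η) by ring, abs_neg] at this
  have h2 : (ξ - η) * (max (-η) 0 - max (-ξ) 0)
      = |ξ - η| * |max (-ξ) 0 - max (-η) 0| := by
    rcases le_total ξ η with h | h
    · have hm : max (-η) 0 ≤ max (-ξ) 0 := max_le_max (by linarith) le_rfl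
      rw [abs_of_nonpos (by linarith : ξ - η ≤ 0),
        abs_of_nonneg (by linarith : (0:ℝ) ≤ max (-ξ) 0 - max (-η) 0)]; ring
    · have hm : max (-ξ) 0 ≤ max (-η) 0 := max_le_max (by linarith) le_rfl
      rw [abs_of_nonneg (by linarith : (0:ℝ) ≤ ξ - η),
        abs_of_nonpos (by linarith : max (-ξ) 0 - max (-η) 0 ≤ 0)]; ring
  rcases eq_or_ne ξ η with rfl | hne
  · simp [Real.zero_rpow (by positivity : p ≠ 0)]
  · have hd : 0 < |ξ - η| := abs_pos.2 (sub_ne_zero.2 hne)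
    have hc : 0 ≤ |max (-ξ) 0 - max (-η) 0| := abs_nonneg _
    rw [mul_assoc, h2, ← mul_assoc]
    have hdd : |ξ - η| ^ (p - 2) * |ξ - η| = |ξ - η| ^ (p - 1) := by
      rw [← Real.rpow_add_one hd.ne' (p - 2)]; ring_nf
    rw [hdd]
    have hLHS : |max (-ξ) 0 - max (-η) 0| ^ p
        = |max (-ξ) 0 - max (-η) 0| ^ (p - 1) * |max (-ξ) 0 - max (-η) 0| := by
      rcases eq_or_lt_of_le hc with h0 | h0
      · rw [← h0, Real.zero_rpow (by positivity : p ≠ 0),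
          Real.zero_rpow (by intro h; linarith [h] : p - 1 ≠ 0), mul_zero]
      · rw [← Real.rpow_add_one h0.ne' (p - 1)]; ring_nf
    rw [hLHS]
    exact mul_le_mul_of_nonneg_right
      (Real.rpow_le_rpow hc h1 (by linarith)) hc
end

section
/- Assume p > 1, s ∈ (0,1), N > sp, that φ ∈ L^∞_loc(ℝ^N) satisfies condition (W), that f : [0,∞) → ℝ is continuous and satisfies (f1), (f2) (with p−1 < q < p*_s − 1) and (f3), and fix R > 0. Let (u_j) ⊂ X_R, c ∈ ℝ, and (ε_j) with ε_j → 0 satisfy J_R(u_j) → c and |∫_{ℝ^N}∫_{ℝ^N} |u_j(x)−u_j(y)|^{p−2}(u_j(x)−u_j(y))(v(x)−v(y))/|x−y|^{N+sp} dx dy − ∫_{B(0,R)} φ(x) f(u_j⁺(x)) v(x) dx| ≤ ε_j [v]_{s,p} for all v ∈ X_R. Then the sequence (u_j) is bounded in the Gagliardo seminorm: there is a constant C' = C'(s, R, p, q, m, c, φ, f) such that sup_j [u_j]_{s,p} ≤ C'. -/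
open MeasureTheory Filter

lemma exists_bound_of_tendsto {a : ℕ → ℝ} {l : ℝ} (h : Tendsto a atTop (nhds l)) :
    ∃ M : ℝ, 0 ≤ M ∧ ∀ j, |a j| ≤ M := by
  obtain ⟨n₀, hn₀⟩ := (Metric.tendsto_atTop.mp h) 1 one_pos
  refine ⟨((Finset.range (n₀+1)).sup' ⟨0, by simp⟩ fun i => |a i|) ⊔ (|l| + 1),
    le_trans (by positivity) le_sup_right, fun j => ?_⟩
  rcases le_or_gt j n₀ with hj | hj
  · exact le_trans (Finset.le_sup' (f := fun i => |a i|)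
      (Finset.mem_range.mpr (Nat.lt_succ_of_le hj))) le_sup_left
  · have := hn₀ j hj.le
    rw [Real.dist_eq] at this
    have : |a j| ≤ |l| + 1 := by
      have h2 := abs_sub_abs_le_abs_sub (a j) l
      linarith
    exact le_trans this le_sup_right

lemma pow_identity {p : ℝ} (hp : 1 < p) (a : ℝ) : |a| ^ (p-2) * a * a = |a| ^ p := by
  rcases eq_or_ne a 0 with h | h
  · simp [h, Real.zero_rpow (show p ≠ 0 by linarith)]
  · have ha : 0 < |a| := abs_pos.mpr h
    have h2 : a * a = |a| ^ (2:ℝ) := by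
      rw [show (2:ℝ) = ((2:ℕ):ℝ) by norm_num, Real.rpow_natCast]
      rw [sq_abs, sq]
    rw [mul_assoc, h2, ← Real.rpow_add ha]
    norm_num

lemma young_aux {p θ C δ : ℝ} (hθ : 0 < θ) (hθp : θ < p) (hC : 0 ≤ C) (hδ : 0 < δ) :
    ∃ K, 0 ≤ K ∧ ∀ t : ℝ, 1 ≤ t → C * t ^ θ ≤ δ * t ^ p + K := by
  set T : ℝ := max 1 ((C/δ) ^ (1/(p - θ))) with hT
  have hT1 : (1:ℝ) ≤ T := le_max_left _ _
  refine ⟨C * T ^ θ, mul_nonneg hC (Real.rpow_nonneg (by linarith) _), fun t ht => ?_⟩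
  rcases le_total t T with hle | hge
  · have h1 : C * t ^ θ ≤ C * T ^ θ :=
      mul_le_mul_of_nonneg_left (Real.rpow_le_rpow (by linarith) hle hθ.le) hC
    have h2 : 0 ≤ δ * t ^ p := mul_nonneg hδ.le (Real.rpow_nonneg (by linarith) _)
    linarith
  · have ht0 : 0 < t := lt_of_lt_of_le one_pos ht
    have hCd : 0 ≤ C / δ := div_nonneg hC hδ.le
    have h1 : C / δ ≤ t ^ (p - θ) := by
      have h2 : (C/δ) ^ (1/(p-θ)) ≤ t := le_trans (le_max_right _ _) hge
      have h3 : ((C/δ) ^ (1/(p-θ))) ^ (p-θ) ≤ t ^ (p-θ) :=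
        Real.rpow_le_rpow (Real.rpow_nonneg hCd _) h2 (by linarith)
      rwa [← Real.rpow_mul hCd, one_div, inv_mul_cancel₀ (show p - θ ≠ 0 by linarith),
        Real.rpow_one] at h3
    have h4 : C ≤ δ * t ^ (p - θ) := by
      rw [div_le_iff₀ hδ] at h1
      linarith
    have h5 : C * t ^ θ ≤ δ * t ^ (p-θ) * t ^ θ :=
      mul_le_mul_of_nonneg_right h4 (Real.rpow_nonneg ht0.le _)
    have h6 : δ * t ^ (p-θ) * t ^ θ = δ * t ^ p := by
      rw [mul_assoc, ← Real.rpow_add ht0]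
      ring_nf
    have h7 : 0 ≤ C * T ^ θ := mul_nonneg hC (Real.rpow_nonneg (by linarith) _)
    linarith

lemma final_bound {p a M E : ℝ} (hp : 1 < p) (ha : 0 < a) (hM : 0 ≤ M) (hE : 0 ≤ E) :
    ∃ C', ∀ X : ℝ, 0 ≤ X → a * X ^ p ≤ M + E * X → X ≤ C' := by
  refine ⟨max 1 (((M + E)/a) ^ (1/(p-1))), fun X hX0 hineq => ?_⟩
  rcases le_or_gt X 1 with h1 | h1
  · exact le_trans h1 (le_max_left _ _)
  · have hX1 : 0 < X := lt_trans one_pos h1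
    have hXp : X ^ p = X ^ (p-1) * X := by
      rw [← Real.rpow_add_one hX1.ne']
      ring_nf
    have hM' : M ≤ M * X := le_mul_of_one_le_right hM h1.le
    have h2 : a * X^(p-1) * X ≤ (M+E) * X := by
      rw [mul_assoc, ← hXp]
      nlinarith
    have h3 : a * X^(p-1) ≤ M + E := le_of_mul_le_mul_right (by linarith) hX1
    have h4 : X^(p-1) ≤ (M+E)/a := (le_div_iff₀ ha).mpr (by linarith)
    have h5 : X = (X^(p-1))^(1/(p-1)) := by
      rw [← Real.rpow_mul hX0, mul_one_div, div_self (show p-1 ≠ 0 by linarith), Real.rpow_one]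
    rw [h5]
    exact le_trans (Real.rpow_le_rpow (Real.rpow_nonneg hX0 _) h4 (by rw [one_div]; exact inv_nonneg.mpr (by linarith))) (le_max_right _ _)

lemma measurable_rpow_const_comp {α : Type*} [MeasurableSpace α] {g : α → ℝ}
    (hg : Measurable g) {r : ℝ} (hr : 0 ≤ r) : Measurable fun x => g x ^ r :=
  ((Real.continuous_rpow_const hr).measurable).comp hg

lemma pow_identity' {p : ℝ} (hp : 1 < p) (a : ℝ) : |a| ^ (p-2) * a * a = |a| ^ p := by
  rcases eq_or_ne a 0 with h | h
  · simp [h, Real.zero_rpow (show p ≠ 0 by linarith)]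
  · have ha : 0 < |a| := abs_pos.mpr h
    have h2 : a * a = |a| ^ (2:ℝ) := by
      rw [show (2:ℝ) = ((2:ℕ):ℝ) by norm_num, Real.rpow_natCast]
      rw [sq_abs, sq]
    rw [mul_assoc, h2, ← Real.rpow_add ha]
    norm_num

lemma gagP_congr {N : ℕ} {s p : ℝ} {u v : EuclideanSpace ℝ (Fin N) → ℝ}
    (h : u =ᵐ[volume] v) : gagP N s p u = gagP N s p v := by
  unfold gagP
  refine lintegral_congr_ae ?_
  filter_upwards [h] with x hx
  refine lintegral_congr_ae ?_
  filter_upwards [h] with y hy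
  rw [hx, hy]

lemma pairing_congr_self {N : ℕ} {s p : ℝ} {u v : EuclideanSpace ℝ (Fin N) → ℝ}
    (h : u =ᵐ[volume] v) : pairing N s p u u = pairing N s p v v := by
  unfold pairing
  refine integral_congr_ae ?_
  filter_upwards [h] with x hx
  refine integral_congr_ae ?_
  filter_upwards [h] with y hy
  rw [hx, hy]

lemma pairing_self {N : ℕ} {s p : ℝ} (hp : 1 < p) (hexp : 0 ≤ (N:ℝ) + s * p) {w : EuclideanSpace ℝ (Fin N) → ℝ}
    (hw : Measurable w) (hfin : gagP N s p w ≠ ⊤) :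
    pairing N s p w w = (gagP N s p w).toReal := by
  set e := (N : ℝ) + s * p with he
  have hker : Measurable (Function.uncurry fun (x y : EuclideanSpace ℝ (Fin N)) =>
      ENNReal.ofReal (|w x - w y| ^ p / ‖x - y‖ ^ e)) := by
    apply Measurable.ennreal_ofReal
    exact (measurable_rpow_const_comp ((hw.comp measurable_fst).sub (hw.comp measurable_snd)).abs
        (by linarith)).div
      (measurable_rpow_const_comp (measurable_fst.sub measurable_snd).norm hexp)
  have hFm : Measurable fun x => ∫⁻ y, ENNReal.ofReal (|w x - w y| ^ p / ‖x - y‖ ^ e) :=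
    Measurable.lintegral_prod_right hker
  have hae : ∀ᵐ x, (∫⁻ y, ENNReal.ofReal (|w x - w y| ^ p / ‖x - y‖ ^ e)) < ⊤ :=
    ae_lt_top hFm hfin
  have inner_eq : ∀ x, (∫ y, |w x - w y| ^ (p-2) * (w x - w y) * (w x - w y) / ‖x - y‖ ^ e)
      = (∫⁻ y, ENNReal.ofReal (|w x - w y| ^ p / ‖x - y‖ ^ e)).toReal := by
    intro x
    have hrw : (fun y => |w x - w y| ^ (p-2) * (w x - w y) * (w x - w y) / ‖x - y‖ ^ e)
        = fun y => |w x - w y| ^ p / ‖x - y‖ ^ e := funext fun y => by rw [pow_identity' hp]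
    rw [hrw]
    exact integral_eq_lintegral_of_nonneg_ae
      (Filter.Eventually.of_forall fun y =>
        div_nonneg (Real.rpow_nonneg (abs_nonneg _) _) (Real.rpow_nonneg (norm_nonneg _) _))
      (((measurable_rpow_const_comp (measurable_const.sub hw).abs (by linarith)).div
        (measurable_rpow_const_comp (measurable_const.sub measurable_id).norm hexp)).aestronglyMeasurable)
  calc pairing N s p w w
      = ∫ x, (∫⁻ y, ENNReal.ofReal (|w x - w y| ^ p / ‖x - y‖ ^ e)).toReal :=
        integral_congr_ae (Filter.Eventually.of_forall inner_eq)
    _ = (gagP N s p w).toReal := integral_toReal hFm.aemeasurable hae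

lemma poincare {N : ℕ} {s p R : ℝ} (hp : 0 < p) (he : 0 < (N:ℝ) + s * p) (hR : 0 < R)
    {w : EuclideanSpace ℝ (Fin N) → ℝ} (hw : Measurable w)
    (hw0 : ∀ᵐ y, y ∉ Metric.ball (0 : EuclideanSpace ℝ (Fin N)) R → w y = 0) :
    (∫⁻ x in Metric.ball (0 : EuclideanSpace ℝ (Fin N)) R, ENNReal.ofReal (|w x| ^ p))
      * (ENNReal.ofReal (((4*R) ^ ((N:ℝ) + s * p))⁻¹)
        * volume (Metric.ball (0 : EuclideanSpace ℝ (Fin N)) (3*R)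
            \ Metric.closedBall (0 : EuclideanSpace ℝ (Fin N)) (2*R)))
      ≤ gagP N s p w := by
  set e := (N : ℝ) + s * p with hedef
  set A := Metric.ball (0 : EuclideanSpace ℝ (Fin N)) (3*R)
      \ Metric.closedBall (0 : EuclideanSpace ℝ (Fin N)) (2*R) with hA
  have hAm : MeasurableSet A := measurableSet_ball.diff measurableSet_closedBall
  set c₄ : ℝ := ((4*R) ^ e)⁻¹ with hc₄
  have h4R : (0:ℝ) < 4*R := by linarith
  have hc₄pos : 0 < c₄ := inv_pos.mpr (Real.rpow_pos_of_pos h4R e)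
  -- step: pointwise lower bound for the inner integral
  have key : ∀ x ∈ Metric.ball (0 : EuclideanSpace ℝ (Fin N)) R,
      ENNReal.ofReal (|w x| ^ p) * (ENNReal.ofReal c₄ * volume A)
        ≤ ∫⁻ y, ENNReal.ofReal (|w x - w y| ^ p / ‖x - y‖ ^ e) := by
    intro x hx
    have hxR : ‖x‖ < R := by simpa [mem_ball_zero_iff] using hx
    have step1 : (∫⁻ y in A, ENNReal.ofReal (|w x - w y| ^ p / ‖x - y‖ ^ e))
        ≤ ∫⁻ y, ENNReal.ofReal (|w x - w y| ^ p / ‖x - y‖ ^ e) :=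
      setLIntegral_le_lintegral _ _
    have step2 : (∫⁻ y in A, ENNReal.ofReal (|w x - w y| ^ p / ‖x - y‖ ^ e))
        = ∫⁻ y in A, ENNReal.ofReal (|w x| ^ p / ‖x - y‖ ^ e) := by
      refine lintegral_congr_ae ?_
      filter_upwards [ae_restrict_of_ae hw0, ae_restrict_mem hAm] with y h1 h2
      have hy2R : 2*R < ‖y‖ := by
        have := h2.2
        simpa [Metric.mem_closedBall, dist_zero_right, not_le] using this
      have : y ∉ Metric.ball (0 : EuclideanSpace ℝ (Fin N)) R := by
        simp only [mem_ball_zero_iff, not_lt]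
        linarith
      rw [h1 this, sub_zero]
    have step3 : (∫⁻ y in A, ENNReal.ofReal (|w x| ^ p * c₄))
        ≤ ∫⁻ y in A, ENNReal.ofReal (|w x| ^ p / ‖x - y‖ ^ e) := by
      refine lintegral_mono_ae ?_
      filter_upwards [ae_restrict_mem hAm] with y hy
      apply ENNReal.ofReal_le_ofReal
      have hy3R : ‖y‖ < 3*R := by simpa [mem_ball_zero_iff] using hy.1
      have hy2R : 2*R < ‖y‖ := by
        have := hy.2
        simpa [Metric.mem_closedBall, dist_zero_right, not_le] using this
      have hub : ‖x - y‖ ≤ 4*R := by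
        have := norm_sub_le x y
        linarith
      have hlb : 0 < ‖x - y‖ := by
        have h5 : ‖y‖ - ‖x‖ ≤ ‖x - y‖ := by
          have := abs_norm_sub_norm_le x y
          have h6 := abs_le.mp this
          linarith [h6.1]
        linarith
      have hden : 0 < ‖x - y‖ ^ e := Real.rpow_pos_of_pos hlb e
      have hdle : ‖x - y‖ ^ e ≤ (4*R) ^ e :=
        Real.rpow_le_rpow (norm_nonneg _) hub he.le
      rw [div_eq_mul_inv]
      exact mul_le_mul_of_nonneg_left (by
        rw [hc₄]
        exact inv_anti₀ hden hdle) (Real.rpow_nonneg (abs_nonneg _) _)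
    have step4 : (∫⁻ y in A, ENNReal.ofReal (|w x| ^ p * c₄))
        = ENNReal.ofReal (|w x| ^ p) * (ENNReal.ofReal c₄ * volume A) := by
      rw [setLIntegral_const, ENNReal.ofReal_mul (Real.rpow_nonneg (abs_nonneg _) _), mul_assoc]
    calc ENNReal.ofReal (|w x| ^ p) * (ENNReal.ofReal c₄ * volume A)
        = ∫⁻ y in A, ENNReal.ofReal (|w x| ^ p * c₄) := step4.symm
      _ ≤ ∫⁻ y in A, ENNReal.ofReal (|w x| ^ p / ‖x - y‖ ^ e) := step3
      _ = ∫⁻ y in A, ENNReal.ofReal (|w x - w y| ^ p / ‖x - y‖ ^ e) := step2.symm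
      _ ≤ _ := step1
  calc (∫⁻ x in Metric.ball (0 : EuclideanSpace ℝ (Fin N)) R, ENNReal.ofReal (|w x| ^ p))
        * (ENNReal.ofReal c₄ * volume A)
      = ∫⁻ x in Metric.ball (0 : EuclideanSpace ℝ (Fin N)) R,
          ENNReal.ofReal (|w x| ^ p) * (ENNReal.ofReal c₄ * volume A) :=
        (lintegral_mul_const _ (measurable_rpow_const_comp hw.abs hp.le).ennreal_ofReal).symm
    _ ≤ ∫⁻ x in Metric.ball (0 : EuclideanSpace ℝ (Fin N)) R,
          ∫⁻ y, ENNReal.ofReal (|w x - w y| ^ p / ‖x - y‖ ^ e) := by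
        refine lintegral_mono_ae ?_
        filter_upwards [ae_restrict_mem measurableSet_ball] with x hx
        exact key x hx
    _ ≤ gagP N s p w := setLIntegral_le_lintegral _ _

set_option maxHeartbeats 2000000 in
theorem palais_smale_bounded
    {N : ℕ} {p s : ℝ} (hp : 1 < p) (hs : 0 < s) (hs1 : s < 1) (hN : s * p < N)
    (φ : EuclideanSpace ℝ (Fin N) → ℝ) (hφm : Measurable φ)
    (hφloc : ∀ K : Set (EuclideanSpace ℝ (Fin N)), IsCompact K → ∃ C₀, ∀ x ∈ K, |φ x| ≤ C₀)
    (ω Ω : Set (EuclideanSpace ℝ (Fin N)))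
    (hωo : IsOpen ω) (hΩo : IsOpen Ω) (hωc : IsConnected ω) (hΩc : IsConnected Ω)
    (hΩb : Bornology.IsBounded Ω) (hωΩ : ω ⊆ Ω)
    (hWneg : ∀ x ∉ Ω, φ x ≤ 0) (hWpos : ∃ ε > (0:ℝ), ∀ x ∈ ω, ε ≤ φ x)
    (f : ℝ → ℝ) (hfc : ContinuousOn f (Set.Ici 0))
    (hf1 : ∀ t ≥ (0:ℝ), 0 ≤ f t)
    {q : ℝ} (hq1 : p - 1 < q) (hq2 : q < N * p / (N - s * p) - 1)
    (c μ : ℝ) (hc : 0 < c) (hμ : 0 < μ)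
    (hf2 : ∀ t ≥ (0:ℝ), μ * t ^ q ≤ f t ∧ f t ≤ c * t ^ q)
    {m C : ℝ} (hm : m < p) (hC : 0 < C)
    (hf3a : ∀ t ≥ (0:ℝ), 0 ≤ (q + 1) * Fint f t - f t * t ∧ (q + 1) * Fint f t - f t * t ≤ C * t ^ m)
    (hf3b : ∀ t ≥ (0:ℝ), 0 ≤ f t * t - p * Fint f t ∧ f t * t - p * Fint f t ≤ C * t ^ (q + 1))
    (R : ℝ) (hR : 0 < R)
    (u : ℕ → EuclideanSpace ℝ (Fin N) → ℝ) (hu : ∀ j, memX N s p R (u j))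
    (c' : ℝ) (ε : ℕ → ℝ) (hε : Tendsto ε atTop (nhds 0))
    (hJ : Tendsto (fun j => JR N s p R φ f (u j)) atTop (nhds c'))
    (hPS : ∀ j, ∀ v, memX N s p R v →
      |pairing N s p (u j) v - ∫ x in Metric.ball (0 : EuclideanSpace ℝ (Fin N)) R, φ x * f (max (u j x) 0) * v x| ≤
        ε j * gag N s p v) :
    ∃ C' : ℝ, ∀ j, gag N s p (u j) ≤ C' := by
  classical
  have hp0 : 0 < p := lt_trans one_pos hp
  have hq0 : 0 < q := by linarith
  have hq1ne : q + 1 ≠ 0 := by positivity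
  have hsp0 : 0 < s * p := mul_pos hs hp0
  have hN0 : (0:ℝ) < N := lt_trans hsp0 hN
  have hNpos : 0 < N := by exact_mod_cast hN0
  have hNsp : 0 < (N:ℝ) - s * p := by linarith
  have hexp : 0 ≤ (N:ℝ) + s * p := by linarith
  have hexp' : 0 < (N:ℝ) + s * p := by linarith
  -- ball
  have hBmeas : MeasurableSet (Metric.ball (0 : EuclideanSpace ℝ (Fin N)) R) := measurableSet_ball
  have hBvol : volume (Metric.ball (0 : EuclideanSpace ℝ (Fin N)) R) < ⊤ := measure_ball_lt_top
  haveI hfinB : IsFiniteMeasure (volume.restrict (Metric.ball (0 : EuclideanSpace ℝ (Fin N)) R)) :=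
    ⟨by rwa [Measure.restrict_apply_univ]⟩
  set Vb : ℝ := (volume (Metric.ball (0 : EuclideanSpace ℝ (Fin N)) R)).toReal with hVbdef
  have hVb0 : 0 ≤ Vb := ENNReal.toReal_nonneg
  -- φ bound
  obtain ⟨C₁, hC₁⟩ := hφloc (Metric.closedBall 0 R) (isCompact_closedBall 0 R)
  set C₀ := max C₁ 0 with hC₀def
  have hC₀0 : 0 ≤ C₀ := le_max_right _ _
  have hC₀ : ∀ x ∈ Metric.ball (0 : EuclideanSpace ℝ (Fin N)) R, |φ x| ≤ C₀ :=
    fun x hx => le_trans (hC₁ x (Metric.ball_subset_closedBall hx)) (le_max_left _ _)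
  -- f facts
  have hf0 : f 0 = 0 := by
    have h1 := (hf2 0 le_rfl).2
    have h2 := hf1 0 le_rfl
    rw [Real.zero_rpow hq0.ne', mul_zero] at h1
    linarith
  set f' : ℝ → ℝ := fun t => f (max t 0) with hf'def
  have hf'c : Continuous f' :=
    hfc.comp_continuous (continuous_id.max continuous_const) (fun t => Set.mem_Ici.mpr (le_max_right _ _))
  have hFeq : ∀ t : ℝ, 0 ≤ t → Fint f t = ∫ τ in (0:ℝ)..t, f' τ := by
    intro t ht
    unfold Fint
    apply intervalIntegral.integral_congr
    intro τ hτ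
    rw [Set.uIcc_of_le ht] at hτ
    simp only [hf'def]
    rw [max_eq_left hτ.1]
  have hF0 : ∀ t : ℝ, 0 ≤ t → 0 ≤ Fint f t := by
    intro t ht
    rw [hFeq t ht]
    apply intervalIntegral.integral_nonneg ht
    intro τ _
    exact hf1 _ (le_max_right _ _)
  have hFle : ∀ t : ℝ, 0 ≤ t → Fint f t ≤ c / (q+1) * t ^ (q+1) := by
    intro t ht
    rw [hFeq t ht]
    have hint : ∫ τ in (0:ℝ)..t, f' τ ≤ ∫ τ in (0:ℝ)..t, c * τ ^ q := by
      apply intervalIntegral.integral_mono_on ht (hf'c.intervalIntegrable 0 t)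
        ((intervalIntegral.intervalIntegrable_rpow' (by linarith)).const_mul c)
      intro τ hτ
      have h0τ : 0 ≤ τ := hτ.1
      have hfτ : f' τ = f τ := by simp only [hf'def]; rw [max_eq_left h0τ]
      rw [hfτ]
      exact (hf2 τ h0τ).2
    have hval : ∫ τ in (0:ℝ)..t, c * τ ^ q = c / (q+1) * t ^ (q+1) := by
      rw [intervalIntegral.integral_const_mul,
        integral_rpow (Or.inl (by linarith : (-1:ℝ) < q)),
        Real.zero_rpow hq1ne]
      ring
    linarith
  -- G
  set G : ℝ → ℝ := fun t => (q+1) * Fint f t - f t * t with hGdef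
  have hG0 : ∀ t : ℝ, 0 ≤ t → 0 ≤ G t := fun t ht => (hf3a t ht).1
  have hGle1 : ∀ t : ℝ, 0 ≤ t → G t ≤ c * t ^ (q+1) := by
    intro t ht
    have h1 := hFle t ht
    have h2 : 0 ≤ f t * t := mul_nonneg (hf1 t ht) ht
    have h3 : (q+1) * Fint f t ≤ (q+1) * (c/(q+1) * t^(q+1)) :=
      mul_le_mul_of_nonneg_left h1 (by linarith)
    have h4 : (q+1) * (c/(q+1) * t^(q+1)) = c * t^(q+1) := by
      field_simp
    simp only [hGdef]
    linarith
  -- primitive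
  set g₁ : ℝ → ℝ := fun t => ∫ τ in (0:ℝ)..(max t 0), f' τ with hg₁def
  have hg₁c : Continuous g₁ :=
    (intervalIntegral.continuous_primitive (fun a b => hf'c.intervalIntegrable a b) 0).comp
      (continuous_id.max continuous_const)
  have hg₁val : ∀ t : ℝ, Fint f (max t 0) = g₁ t := fun t => hFeq (max t 0) (le_max_right _ _)
  have hfmul : ∀ t : ℝ, f (max t 0) * t = f (max t 0) * max t 0 := by
    intro t
    rcases le_or_gt 0 t with h | h
    · rw [max_eq_left h]
    · have hmax : max t 0 = 0 := max_eq_right h.le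
      rw [hmax, hf0, zero_mul, zero_mul]
  -- constants aq
  have haq : 0 < (q+1)/p - 1 := by
    rw [lt_sub_iff_add_lt, zero_add, lt_div_iff₀ hp0]
    linarith
  set aq := (q+1)/p - 1 with haqdef
  -- Poincaré constant
  set A := Metric.ball (0 : EuclideanSpace ℝ (Fin N)) (3*R)
      \ Metric.closedBall (0 : EuclideanSpace ℝ (Fin N)) (2*R) with hAdef
  set κ : ENNReal := ENNReal.ofReal (((4*R) ^ ((N:ℝ) + s * p))⁻¹) * volume A with hκdef
  have hAopen : IsOpen A := Metric.isOpen_ball.sdiff Metric.isClosed_closedBall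
  have hAne : A.Nonempty := by
    refine ⟨EuclideanSpace.single (⟨0, hNpos⟩ : Fin N) ((5*R/2 : ℝ)), ?_, ?_⟩
    · rw [mem_ball_zero_iff, EuclideanSpace.norm_single, Real.norm_eq_abs,
        abs_of_pos (by linarith)]
      linarith
    · simp only [Metric.mem_closedBall, dist_zero_right, EuclideanSpace.norm_single,
        Real.norm_eq_abs, not_le]
      rw [abs_of_pos (by linarith)]
      linarith
  have hκ0 : κ ≠ 0 := by
    apply mul_ne_zero
    · simp only [ne_eq, ENNReal.ofReal_eq_zero, not_le]
      exact inv_pos.mpr (Real.rpow_pos_of_pos (by linarith) _)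
    · exact (hAopen.measure_pos volume hAne).ne'
  have hκtop : κ ≠ ⊤ := by
    apply ENNReal.mul_ne_top ENNReal.ofReal_ne_top
    have hsub : volume A ≤ volume (Metric.ball (0 : EuclideanSpace ℝ (Fin N)) (3*R)) :=
      measure_mono Set.diff_subset
    exact (lt_of_le_of_lt hsub measure_ball_lt_top).ne
  set κ₀ : ℝ := (κ.toReal)⁻¹ with hκ₀def
  have hκ₀0 : 0 ≤ κ₀ := inv_nonneg.mpr ENNReal.toReal_nonneg
  -- δ
  set δ := aq / (2 * (C₀ * κ₀ + 1)) with hδdef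
  have hδ : 0 < δ := by
    apply div_pos haq
    nlinarith [mul_nonneg hC₀0 hκ₀0]
  have hδkey : C₀ * δ * κ₀ ≤ aq / 2 := by
    have hpos : 0 < 2 * (C₀ * κ₀ + 1) := by nlinarith [mul_nonneg hC₀0 hκ₀0]
    rw [hδdef, show C₀ * (aq / (2 * (C₀ * κ₀ + 1))) * κ₀ = aq * (C₀ * κ₀) / (2 * (C₀ * κ₀ + 1))
      by ring, div_le_div_iff₀ hpos two_pos]
    nlinarith [haq, mul_nonneg hC₀0 hκ₀0]
  -- young
  obtain ⟨K, hK0, hKyoung⟩ := young_aux (show (0:ℝ) < max m 1 from lt_of_lt_of_le one_pos (le_max_right m 1))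
    (max_lt hm hp) hC.le hδ
  set K' := c + K with hK'def
  have hK'0 : 0 ≤ K' := by rw [hK'def]; linarith
  have hGbound : ∀ t : ℝ, 0 ≤ t → G t ≤ δ * t ^ p + K' := by
    intro t ht
    rcases le_or_gt t 1 with h1 | h1
    · have h2 := hGle1 t ht
      have h3 : t ^ (q+1) ≤ 1 := Real.rpow_le_one ht h1 (by linarith)
      have h4 : c * t ^ (q+1) ≤ c := by nlinarith
      have h5 : 0 ≤ δ * t ^ p := mul_nonneg hδ.le (Real.rpow_nonneg ht _)
      rw [hK'def]
      linarith
    · have hm' : t ^ m ≤ t ^ (max m 1) := Real.rpow_le_rpow_of_exponent_le h1.le (le_max_left m 1)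
      have h2 : G t ≤ C * t ^ (max m 1) := le_trans (hf3a t ht).2 (mul_le_mul_of_nonneg_left hm' hC.le)
      have h3 := hKyoung t h1.le
      rw [hK'def]
      linarith
  -- sequence bounds
  obtain ⟨M, hM0, hM⟩ := exists_bound_of_tendsto hJ
  obtain ⟨E, hE0, hE⟩ := exists_bound_of_tendsto hε
  set M₁ := (q+1) * M + C₀ * (K' * Vb) with hM₁def
  have hM₁0 : 0 ≤ M₁ := by
    rw [hM₁def]
    have h1 : 0 ≤ (q+1) * M := mul_nonneg (by linarith) hM0
    have h2 : 0 ≤ C₀ * (K' * Vb) := mul_nonneg hC₀0 (mul_nonneg hK'0 hVb0)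
    linarith
  obtain ⟨C', hC'⟩ := final_bound hp (half_pos haq) hM₁0 hE0
  refine ⟨C', fun j => ?_⟩
  -- per j
  obtain ⟨⟨hLp, hgfin⟩, hzero⟩ := hu j
  set g := (gagP N s p (u j)).toReal with hgdef
  have hg0 : 0 ≤ g := ENNReal.toReal_nonneg
  have hX0 : 0 ≤ gag N s p (u j) := by
    unfold gag
    exact Real.rpow_nonneg ENNReal.toReal_nonneg _
  have hgX : (gag N s p (u j)) ^ p = g := by
    unfold gag
    rw [← hgdef, ← Real.rpow_mul hg0, one_div, inv_mul_cancel₀ (ne_of_gt hp0), Real.rpow_one]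
  -- measurable representative
  have hasm : AEStronglyMeasurable (u j) volume := hLp.aestronglyMeasurable
  set w := hasm.mk (u j) with hwdef
  have hww : u j =ᵐ[volume] w := hasm.ae_eq_mk
  have hwm : Measurable w := hasm.stronglyMeasurable_mk.measurable
  have hpair : pairing N s p (u j) (u j) = g := by
    rw [pairing_congr_self hww, pairing_self hp hexp hwm
      (by rw [← gagP_congr hww]; exact hgfin.ne), hgdef, gagP_congr hww]
  have hw0 : ∀ᵐ y, y ∉ Metric.ball (0 : EuclideanSpace ℝ (Fin N)) R → w y = 0 := by
    filter_upwards [hzero, hww] with y h1 h2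
    intro hy
    rw [← h2]
    exact h1 hy
  -- Poincaré
  set Pt := ∫⁻ x in Metric.ball (0 : EuclideanSpace ℝ (Fin N)) R,
      ENNReal.ofReal (|u j x| ^ p) with hPtdef
  have hPtw : Pt = ∫⁻ x in Metric.ball (0 : EuclideanSpace ℝ (Fin N)) R,
      ENNReal.ofReal (|w x| ^ p) := by
    rw [hPtdef]
    refine lintegral_congr_ae ?_
    filter_upwards [ae_restrict_of_ae hww] with x hx
    rw [hx]
  have hPtκ : Pt * κ ≤ gagP N s p (u j) := by
    rw [hPtw, gagP_congr hww, hκdef, hAdef]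
    exact poincare hp0 hexp' hR hwm hw0
  have hPle : Pt ≤ gagP N s p (u j) / κ :=
    (ENNReal.le_div_iff_mul_le (Or.inl hκ0) (Or.inl hκtop)).mpr hPtκ
  have hPtR : Pt.toReal ≤ g * κ₀ := by
    have h1 := ENNReal.toReal_mono (ENNReal.div_lt_top hgfin.ne hκ0).ne hPle
    rw [ENNReal.toReal_div] at h1
    calc Pt.toReal ≤ (gagP N s p (u j)).toReal / κ.toReal := h1
      _ = g * κ₀ := by rw [← hgdef, hκ₀def, div_eq_mul_inv]
  have hIpeq : (∫ x in Metric.ball (0 : EuclideanSpace ℝ (Fin N)) R, |u j x| ^ p) = Pt.toReal := by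
    rw [hPtdef]
    exact integral_eq_lintegral_of_nonneg_ae
      (Filter.Eventually.of_forall fun x => Real.rpow_nonneg (abs_nonneg _) _)
      (((Real.continuous_rpow_const hp0.le).comp continuous_abs).comp_aestronglyMeasurable
        hasm.restrict)
  -- integrability
  have hq1p : q + 1 ≤ (N:ℝ) * p / ((N:ℝ) - s * p) := by linarith
  have hpstarp : p ≤ (N:ℝ) * p / ((N:ℝ) - s * p) := by
    rw [le_div_iff₀ hNsp]
    nlinarith
  have hLq1 : Integrable (fun x => |u j x| ^ (q+1))
      (volume.restrict (Metric.ball (0 : EuclideanSpace ℝ (Fin N)) R)) := by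
    have h1 : MemLp (u j) (ENNReal.ofReal (q+1))
        (volume.restrict (Metric.ball (0 : EuclideanSpace ℝ (Fin N)) R)) :=
      (hLp.restrict _).mono_exponent (ENNReal.ofReal_le_ofReal hq1p)
    have h2 := h1.integrable_norm_rpow (ENNReal.ofReal_pos.mpr (by linarith)).ne'
      ENNReal.ofReal_ne_top
    simpa [ENNReal.toReal_ofReal (show (0:ℝ) ≤ q+1 by linarith), Real.norm_eq_abs] using h2
  have hLpp : Integrable (fun x => |u j x| ^ p)
      (volume.restrict (Metric.ball (0 : EuclideanSpace ℝ (Fin N)) R)) := by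
    have h1 : MemLp (u j) (ENNReal.ofReal p)
        (volume.restrict (Metric.ball (0 : EuclideanSpace ℝ (Fin N)) R)) :=
      (hLp.restrict _).mono_exponent (ENNReal.ofReal_le_ofReal hpstarp)
    have h2 := h1.integrable_norm_rpow (ENNReal.ofReal_pos.mpr hp0).ne' ENNReal.ofReal_ne_top
    simpa [ENNReal.toReal_ofReal hp0.le, Real.norm_eq_abs] using h2
  -- P and Q
  set P := ∫ x in Metric.ball (0 : EuclideanSpace ℝ (Fin N)) R, φ x * Fint f (max (u j x) 0)
    with hPdef
  set Q := ∫ x in Metric.ball (0 : EuclideanSpace ℝ (Fin N)) R, φ x * f (max (u j x) 0) * u j x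
    with hQdef
  have hJval : JR N s p R φ f (u j) = 1/p * g - P := by
    unfold JR
    rw [← hgdef, ← hPdef]
  have hmeasφ : AEStronglyMeasurable φ
      (volume.restrict (Metric.ball (0 : EuclideanSpace ℝ (Fin N)) R)) :=
    hφm.aestronglyMeasurable.restrict
  have hPint : Integrable (fun x => φ x * Fint f (max (u j x) 0))
      (volume.restrict (Metric.ball (0 : EuclideanSpace ℝ (Fin N)) R)) := by
    apply Integrable.mono' (hLq1.const_mul (C₀ * (c/(q+1))))
    · apply hmeasφ.mul
      have hrw : (fun x => Fint f (max (u j x) 0)) = fun x => g₁ (u j x) :=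
        funext fun x => hg₁val _
      rw [hrw]
      exact hg₁c.comp_aestronglyMeasurable hasm.restrict
    · filter_upwards [ae_restrict_mem hBmeas] with x hx
      have h1 : |φ x| ≤ C₀ := hC₀ x hx
      have hmax0 : (0:ℝ) ≤ max (u j x) 0 := le_max_right _ _
      have h2 : |Fint f (max (u j x) 0)| ≤ c/(q+1) * |u j x| ^ (q+1) := by
        rw [abs_of_nonneg (hF0 _ hmax0)]
        refine le_trans (hFle _ hmax0) ?_
        apply mul_le_mul_of_nonneg_left _ (by positivity : (0:ℝ) ≤ c/(q+1))
        exact Real.rpow_le_rpow hmax0 (max_le (le_abs_self _) (abs_nonneg _)) (by linarith)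
      calc ‖φ x * Fint f (max (u j x) 0)‖
          = |φ x| * |Fint f (max (u j x) 0)| := by rw [Real.norm_eq_abs, abs_mul]
        _ ≤ C₀ * (c/(q+1) * |u j x| ^ (q+1)) := mul_le_mul h1 h2 (abs_nonneg _) hC₀0
        _ = C₀ * (c/(q+1)) * |u j x| ^ (q+1) := by ring
  have habsq : ∀ t : ℝ, |t| ^ q * |t| = |t| ^ (q+1) := by
    intro t
    rcases eq_or_ne t 0 with h | h
    · simp [h, Real.zero_rpow hq0.ne', Real.zero_rpow hq1ne]
    · rw [Real.rpow_add_one (abs_ne_zero.mpr h)]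
  have hQint : Integrable (fun x => φ x * f (max (u j x) 0) * u j x)
      (volume.restrict (Metric.ball (0 : EuclideanSpace ℝ (Fin N)) R)) := by
    apply Integrable.mono' (hLq1.const_mul (C₀ * c))
    · apply AEStronglyMeasurable.mul _ hasm.restrict
      apply hmeasφ.mul
      have hrw : (fun x => f (max (u j x) 0)) = fun x => f' (u j x) := rfl
      rw [hrw]
      exact hf'c.comp_aestronglyMeasurable hasm.restrict
    · filter_upwards [ae_restrict_mem hBmeas] with x hx
      have h0 : 0 ≤ f (max (u j x) 0) := hf1 _ (le_max_right _ _)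
      have h2 : f (max (u j x) 0) ≤ c * |u j x| ^ q := by
        refine le_trans (hf2 _ (le_max_right _ _)).2 ?_
        apply mul_le_mul_of_nonneg_left _ hc.le
        exact Real.rpow_le_rpow (le_max_right _ _) (max_le (le_abs_self _) (abs_nonneg _)) hq0.le
      calc ‖φ x * f (max (u j x) 0) * u j x‖
          = |φ x| * f (max (u j x) 0) * |u j x| := by
            rw [Real.norm_eq_abs, abs_mul, abs_mul, abs_of_nonneg h0]
        _ ≤ C₀ * (c * |u j x| ^ q) * |u j x| := by
            exact mul_le_mul (mul_le_mul (hC₀ x hx) h2 h0 hC₀0) le_rfl (abs_nonneg _)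
              (mul_nonneg hC₀0 (mul_nonneg hc.le (Real.rpow_nonneg (abs_nonneg _) _)))
        _ = C₀ * c * (|u j x| ^ q * |u j x|) := by ring
        _ = C₀ * c * |u j x| ^ (q+1) := by rw [habsq]
  have hGid : ∀ x, (q+1) * (φ x * Fint f (max (u j x) 0)) - φ x * f (max (u j x) 0) * u j x
      = φ x * G (max (u j x) 0) := by
    intro x
    simp only [hGdef]
    rw [← hfmul (u j x)]
    ring
  have hGint : Integrable (fun x => φ x * G (max (u j x) 0))
      (volume.restrict (Metric.ball (0 : EuclideanSpace ℝ (Fin N)) R)) :=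
    ((hPint.const_mul (q+1)).sub hQint).congr (Filter.Eventually.of_forall hGid)
  have hsubPQ : (∫ x in Metric.ball (0 : EuclideanSpace ℝ (Fin N)) R, φ x * G (max (u j x) 0))
      = (q+1) * P - Q := by
    calc (∫ x in Metric.ball (0 : EuclideanSpace ℝ (Fin N)) R, φ x * G (max (u j x) 0))
        = ∫ x in Metric.ball (0 : EuclideanSpace ℝ (Fin N)) R,
            ((q+1) * (φ x * Fint f (max (u j x) 0)) - φ x * f (max (u j x) 0) * u j x) :=
          integral_congr_ae (Filter.Eventually.of_forall fun x => (hGid x).symm)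
      _ = (q+1) * P - Q := by
          rw [integral_sub (hPint.const_mul _) hQint, integral_const_mul, ← hPdef, ← hQdef]
  have hGbnd : (∫ x in Metric.ball (0 : EuclideanSpace ℝ (Fin N)) R, φ x * G (max (u j x) 0))
      ≤ C₀ * (δ * Pt.toReal + K' * Vb) := by
    have hrhsint : Integrable (fun x => C₀ * (δ * |u j x| ^ p + K'))
        (volume.restrict (Metric.ball (0 : EuclideanSpace ℝ (Fin N)) R)) :=
      ((hLpp.const_mul δ).add (integrable_const K')).const_mul C₀
    have hle := setIntegral_mono_on hGint hrhsint hBmeas ?_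
    · refine le_trans hle (le_of_eq ?_)
      rw [integral_const_mul, integral_add (hLpp.const_mul δ) (integrable_const K'),
        integral_const_mul, hIpeq, setIntegral_const, smul_eq_mul, measureReal_def, ← hVbdef, mul_comm Vb K']
    · intro x hx
      have hmax0 : (0:ℝ) ≤ max (u j x) 0 := le_max_right _ _
      have h1 : φ x * G (max (u j x) 0) ≤ |φ x| * G (max (u j x) 0) :=
        mul_le_mul_of_nonneg_right (le_abs_self _) (hG0 _ hmax0)
      have h2 : |φ x| * G (max (u j x) 0) ≤ C₀ * (δ * |u j x| ^ p + K') := by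
        apply mul_le_mul (hC₀ x hx) _ (hG0 _ hmax0) hC₀0
        refine le_trans (hGbound _ hmax0) ?_
        have h3 : (max (u j x) 0) ^ p ≤ |u j x| ^ p :=
          Real.rpow_le_rpow hmax0 (max_le (le_abs_self _) (abs_nonneg _)) hp0.le
        have h4 : δ * (max (u j x) 0) ^ p ≤ δ * |u j x| ^ p :=
          mul_le_mul_of_nonneg_left h3 hδ.le
        linarith
      linarith
  -- PS applied to u j
  have hps := hPS j (u j) (hu j)
  rw [hpair, ← hQdef] at hps
  have habs2 : |g - Q| ≤ E * gag N s p (u j) :=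
    le_trans hps (mul_le_mul_of_nonneg_right (le_trans (le_abs_self _) (hE j)) hX0)
  have hJj : |JR N s p R φ f (u j)| ≤ M := hM j
  rw [hJval] at hJj
  -- master inequality
  have e1 : aq * g = (q+1) * (1/p * g - P) - (g - Q) + ((q+1) * P - Q) := by
    rw [haqdef]; ring
  have e2 : (q+1) * (1/p * g - P) ≤ (q+1) * M :=
    mul_le_mul_of_nonneg_left (le_trans (le_abs_self _) hJj) (by linarith)
  have e3 : -(g - Q) ≤ E * gag N s p (u j) := le_trans (neg_le_abs _) habs2
  have e4 : (q+1) * P - Q ≤ C₀ * (δ * (g * κ₀) + K' * Vb) := by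
    rw [← hsubPQ]
    refine le_trans hGbnd ?_
    have h5 : δ * Pt.toReal ≤ δ * (g * κ₀) := mul_le_mul_of_nonneg_left hPtR hδ.le
    apply mul_le_mul_of_nonneg_left _ hC₀0
    linarith
  have h5 : C₀ * (δ * (g * κ₀)) ≤ aq/2 * g := by
    have h6 := mul_le_mul_of_nonneg_right hδkey hg0
    calc C₀ * (δ * (g * κ₀)) = (C₀ * δ * κ₀) * g := by ring
      _ ≤ aq/2 * g := h6
  clear_value aq δ κ₀ K' M₁ C₀ Vb g P Q Pt
  have hfin2 : aq/2 * (gag N s p (u j)) ^ p ≤ M₁ + E * gag N s p (u j) := by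
    rw [hgX, hM₁def]
    have e4' : (q+1) * P - Q ≤ C₀ * (δ * (g * κ₀)) + C₀ * (K' * Vb) := by
      rw [← mul_add]; exact e4
    have hhalf : aq/2 * g + aq/2 * g = aq * g := by ring
    linarith [e1, e2, e3, e4', h5]
  exact hC' _ hX0 hfin2
end
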